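/- For t large enough (so that 5π/(4t) < 1), the integral T(t) = ∫_{ℝ²} e^{−|ξ|²} sin²(t|ξ|)/|ξ|² dξ satisfies T(t) ≥ (2π) · (e^{−1}/4) · (log t + log 4 − log(5π)). -/

import Mathlib

open MeasureTheory Set Metric

theorem stmt_6 (t : ℝ) (ht : 1 < t) (ht' : 5 * Real.pi / (4 * t) < 1) :
    (2 * Real.pi) * (Real.exp (-1) / 4) * (Real.log t + Real.log 4 - Real.log (5 * Real.pi))
      ≤ ∫ ξ : EuclideanSpace ℝ (Fin 2),
          Real.exp (-‖ξ‖ ^ 2) * Real.sin (t * ‖ξ‖) ^ 2 / ‖ξ‖ ^ 2 := by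
  have hπ := Real.pi_pos
  have ht0 : (0:ℝ) < t := lt_trans one_pos ht
  set a : ℝ := 5 * Real.pi / (4 * t) with ha_def
  have ha0 : 0 < a := by positivity
  have ha1 : a < 1 := ht'
  have hta : t * a = 5 * Real.pi / 4 := by
    rw [ha_def]; field_simp
  -- the numerator function and antiderivative
  set N : ℝ → ℝ := fun u => (u - 5*Real.pi/4)/4 - Real.sin (2*u)/4 + 1/4 with hN
  set Φ : ℝ → ℝ := fun r => N (t*r) / (t*r) + Real.log r / 4 with hΦ
  have hNnonneg : ∀ u : ℝ, 5 * Real.pi / 4 ≤ u → 0 ≤ N u := by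
    intro u hu
    have h1 := Real.sin_le_one (2*u)
    simp only [hN]
    nlinarith
  -- derivative of Φ
  have hderiv : ∀ r : ℝ, 0 < r →
      HasDerivAt Φ (Real.sin (t*r)^2 / r - N (t*r) / (t*r^2)) r := by
    intro r hr
    have hr' : r ≠ 0 := hr.ne'
    have htr : t * r ≠ 0 := by positivity
    have ht1 : HasDerivAt (fun r : ℝ => t*r) t r := by
      simpa using (hasDerivAt_id r).const_mul t
    have h2t : HasDerivAt (fun r : ℝ => 2*(t*r)) (2*t) r := by
      simpa [mul_assoc] using (hasDerivAt_id r).const_mul (2*t)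
    have hs : HasDerivAt (fun r => Real.sin (2*(t*r))) (Real.cos (2*(t*r)) * (2*t)) r :=
      (Real.hasDerivAt_sin _).comp r h2t
    have hnum : HasDerivAt (fun r => N (t*r))
        (t/4 - Real.cos (2*(t*r)) * (2*t) / 4) r :=
      (((ht1.sub_const _).div_const 4).sub (hs.div_const 4)).add_const _
    have hq := hnum.div ht1 htr
    have hlog := (Real.hasDerivAt_log hr').div_const 4
    convert hq.add hlog using 1
    · rfl
    · rfl
    · rfl
    simp only [hN]
    rw [Real.sin_sq_eq_half_sub]
    field_simp
    ring
  -- continuity facts on [a,1]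
  have hpos_mem : ∀ x ∈ uIcc a (1:ℝ), 0 < x := by
    intro x hx
    rw [uIcc_of_le ha1.le] at hx
    exact lt_of_lt_of_le ha0 hx.1
  have hcont_sin : ContinuousOn (fun r : ℝ => Real.sin (t*r)^2 / r) (uIcc a 1) := by
    apply ContinuousOn.div
    · fun_prop
    · fun_prop
    · exact fun x hx => (hpos_mem x hx).ne'
  have hcont_N : ContinuousOn (fun r : ℝ => N (t*r) / (t*r^2)) (uIcc a 1) := by
    apply ContinuousOn.div
    · simp only [hN]; fun_prop
    · fun_prop
    · intro x hx
      have := hpos_mem x hx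
      positivity
  have hint_sin : IntervalIntegrable (fun r : ℝ => Real.sin (t*r)^2 / r) volume a 1 :=
    hcont_sin.intervalIntegrable
  have hint_deriv : IntervalIntegrable
      (fun r : ℝ => Real.sin (t*r)^2 / r - N (t*r) / (t*r^2)) volume a 1 :=
    (hcont_sin.sub hcont_N).intervalIntegrable
  -- FTC
  have hFTC : ∫ r in a..1, (Real.sin (t*r)^2 / r - N (t*r) / (t*r^2)) = Φ 1 - Φ a :=
    intervalIntegral.integral_eq_sub_of_hasDerivAt
      (fun r hr => hderiv r (hpos_mem r hr)) hint_deriv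
  -- key lower bound on sin² integral
  have hS : (- Real.log a) / 4 ≤ ∫ r in a..1, Real.sin (t*r)^2 / r := by
    have hmono : ∫ r in a..1, (Real.sin (t*r)^2 / r - N (t*r) / (t*r^2))
        ≤ ∫ r in a..1, Real.sin (t*r)^2 / r := by
      apply intervalIntegral.integral_mono_on ha1.le hint_deriv hint_sin
      intro x hx
      have hx0 : 0 < x := lt_of_lt_of_le ha0 hx.1
      have hNx : 0 ≤ N (t*x) := by
        apply hNnonneg
        rw [← hta]
        exact mul_le_mul_of_nonneg_left hx.1 ht0.le
      have : 0 ≤ N (t*x) / (t*x^2) := by positivity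
      linarith
    have hΦ1 : Φ 1 = N t / t := by simp [hΦ]
    have hΦa : Φ a = Real.log a / 4 := by
      have hNta : N (t*a) = 0 := by
        rw [hta]
        have h52 : 2 * (5 * Real.pi / 4) = Real.pi/2 + 2*Real.pi := by ring
        simp [hN, h52, Real.sin_add_two_pi]
      rw [hΦ]
      simp only [hNta, zero_div, zero_add]
    have hNt : 0 ≤ N t / t := by
      have : 5 * Real.pi / 4 ≤ t := by
        rw [div_lt_one (by positivity)] at ht'
        linarith
      have := hNnonneg t this
      positivity
    rw [hFTC, hΦ1, hΦa] at hmono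
    linarith
  -- insert exp factor
  have hE : Real.exp (-1) * ∫ r in a..1, Real.sin (t*r)^2 / r
      ≤ ∫ r in a..1, Real.exp (-r^2) * Real.sin (t*r)^2 / r := by
    rw [← intervalIntegral.integral_const_mul]
    apply intervalIntegral.integral_mono_on ha1.le
      (hint_sin.const_mul _)
    · apply ContinuousOn.intervalIntegrable
      apply ContinuousOn.div
      · fun_prop
      · fun_prop
      · exact fun x hx => (hpos_mem x hx).ne'
    · intro x hx
      have hx0 : 0 < x := lt_of_lt_of_le ha0 hx.1
      have hexp : Real.exp (-1) ≤ Real.exp (-x^2) := by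
        apply Real.exp_le_exp.mpr
        nlinarith [hx.2]
      have hsq : 0 ≤ Real.sin (t*x)^2 / x := by positivity
      calc Real.exp (-1) * (Real.sin (t*x)^2 / x)
          ≤ Real.exp (-x^2) * (Real.sin (t*x)^2 / x) :=
            mul_le_mul_of_nonneg_right hexp hsq
        _ = Real.exp (-x^2) * Real.sin (t*x)^2 / x := by ring
  -- integrability on Ioi 0
  have hintIoi : IntegrableOn
      (fun y : ℝ => y * (Real.exp (-y^2) * Real.sin (t*y)^2 / y^2)) (Ioi 0) := by
    have hdom : Integrable (fun y : ℝ => t^2 * (y * Real.exp (-1*y^2))) :=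
      (integrable_mul_exp_neg_mul_sq one_pos).const_mul _
    apply Integrable.mono hdom.integrableOn
    · apply Measurable.aestronglyMeasurable
      fun_prop
    · filter_upwards [ae_restrict_mem measurableSet_Ioi] with y (hy : 0 < y)
      rw [Real.norm_eq_abs, Real.norm_eq_abs,
        abs_of_nonneg (by positivity), abs_of_nonneg (by positivity)]
      have hsin : Real.sin (t*y)^2 ≤ (t*y)^2 := Real.sin_sq_le_sq
      calc y * (Real.exp (-y^2) * Real.sin (t*y)^2 / y^2)
          ≤ y * (Real.exp (-y^2) * (t*y)^2 / y^2) := by gcongr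
        _ = t^2 * (y * Real.exp (-1*y^2)) := by
            field_simp
  -- restrict Ioi 0 integral to (a,1]
  have hIoc : ∫ y in Ioc a 1, y * (Real.exp (-y^2) * Real.sin (t*y)^2 / y^2)
      = ∫ r in a..1, Real.exp (-r^2) * Real.sin (t*r)^2 / r := by
    rw [intervalIntegral.integral_of_le ha1.le]
    apply setIntegral_congr_fun measurableSet_Ioc
    intro y hy
    have hy0 : (0:ℝ) < y := lt_trans ha0 hy.1
    field_simp
  have hrestr : ∫ y in Ioc a 1, y * (Real.exp (-y^2) * Real.sin (t*y)^2 / y^2)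
      ≤ ∫ y in Ioi (0:ℝ), y * (Real.exp (-y^2) * Real.sin (t*y)^2 / y^2) := by
    apply setIntegral_mono_set hintIoi
    · filter_upwards [ae_restrict_mem measurableSet_Ioi] with y (hy : 0 < y)
      positivity
    · filter_upwards with y hy
      exact lt_trans ha0 hy.1
  -- polar coordinates
  have hpolar : ∫ ξ : EuclideanSpace ℝ (Fin 2),
        Real.exp (-‖ξ‖ ^ 2) * Real.sin (t * ‖ξ‖) ^ 2 / ‖ξ‖ ^ 2
      = 2 * (Real.pi * ∫ y in Ioi (0:ℝ),
          y * (Real.exp (-y ^ 2) * Real.sin (t * y) ^ 2 / y ^ 2)) := by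
    have h := MeasureTheory.integral_fun_norm_addHaar (volume : Measure (EuclideanSpace ℝ (Fin 2)))
      (fun y => Real.exp (-y ^ 2) * Real.sin (t * y) ^ 2 / y ^ 2)
    have hball : (volume (ball (0 : EuclideanSpace ℝ (Fin 2)) 1)).toReal = Real.pi := by
      rw [EuclideanSpace.volume_ball]
      norm_num [Real.sq_sqrt Real.pi_pos.le, Real.Gamma_two, ENNReal.toReal_ofReal Real.pi_pos.le]
    simp only [finrank_euclideanSpace, Fintype.card_fin, pow_one, smul_eq_mul, nsmul_eq_mul] at h
    rw [h, measureReal_def, hball]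
    norm_num
  -- log arithmetic
  have hloga : - Real.log a = Real.log t + Real.log 4 - Real.log (5*Real.pi) := by
    rw [ha_def, Real.log_div (by positivity) (by positivity),
      Real.log_mul (by norm_num) ht0.ne']
    ring
  -- conclude
  rw [hpolar, ← hloga]
  have hIchain : Real.exp (-1) * ((- Real.log a) / 4)
      ≤ ∫ y in Ioi (0:ℝ), y * (Real.exp (-y ^ 2) * Real.sin (t * y) ^ 2 / y ^ 2) := by
    calc Real.exp (-1) * ((- Real.log a) / 4)
        ≤ Real.exp (-1) * ∫ r in a..1, Real.sin (t*r)^2 / r :=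
          mul_le_mul_of_nonneg_left hS (Real.exp_nonneg _)
      _ ≤ ∫ r in a..1, Real.exp (-r^2) * Real.sin (t*r)^2 / r := hE
      _ = ∫ y in Ioc a 1, y * (Real.exp (-y^2) * Real.sin (t*y)^2 / y^2) := hIoc.symm
      _ ≤ _ := hrestr
  nlinarith [Real.pi_pos, hIchain]
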